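/- Let T ≥ 1, let φ : ℝ → ℝ be convex on [0,∞) with φ(1) = 0, and let 0 < δ₁ ≤ δ₂. Then for every loss vector l ∈ ℝ^T with l_t ≥ 0 for all t, it holds that ρ_{φ,δ₂}(l) ≤ (δ₂/δ₁) · ρ_{φ,δ₁}(l). -/

import Mathlib

/-- The feasible perturbation set `Q_{φ,δ}` of probability vectors on `Fin T`
whose f-divergence from the uniform vector is at most `δ`. -/
def QSet (T : ℕ) (φ : ℝ → ℝ) (δ : ℝ) : Set (Fin T → ℝ) :=
  {q | (∀ t, 0 ≤ q t) ∧ (∑ t, q t = 1) ∧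
    (1 / (T : ℝ)) * ∑ t, φ ((T : ℝ) * q t) ≤ δ}

/-- The f-divergence induced risk `ρ_{φ,δ}(l) = sup_{q ∈ Q_{φ,δ}} ∑_t q_t l_t`. -/
noncomputable def fRisk (T : ℕ) (φ : ℝ → ℝ) (δ : ℝ) (l : Fin T → ℝ) : ℝ :=
  sSup ((fun q : Fin T → ℝ => ∑ t, q t * l t) '' (QSet T φ δ))

theorem stmt_8 (T : ℕ) (hT : 1 ≤ T) (φ : ℝ → ℝ)
    (hφconv : ConvexOn ℝ (Set.Ici (0 : ℝ)) φ) (hφ1 : φ 1 = 0)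
    (δ₁ δ₂ : ℝ) (hδ₁ : 0 < δ₁) (hδ : δ₁ ≤ δ₂)
    (l : Fin T → ℝ) (hl : ∀ t, 0 ≤ l t) :
    fRisk T φ δ₂ l ≤ (δ₂ / δ₁) * fRisk T φ δ₁ l := by
  have hT0 : (0:ℝ) < (T:ℝ) := by exact_mod_cast hT
  have hδ₂ : 0 < δ₂ := lt_of_lt_of_le hδ₁ hδ
  set lam : ℝ := δ₁ / δ₂ with hlam
  have hlam0 : 0 < lam := div_pos hδ₁ hδ₂
  have hlam1 : lam ≤ 1 := div_le_one_of_le₀ hδ hδ₂.le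
  -- uniform vector
  have hunif : ∀ δ, 0 ≤ δ → (fun _ : Fin T => 1 / (T:ℝ)) ∈ QSet T φ δ := by
    intro δ hδ0
    refine ⟨fun t => by positivity, ?_, ?_⟩
    · simp [Finset.sum_const, Finset.card_univ]
      field_simp
    · have h1 : (T:ℝ) * (1 / (T:ℝ)) = 1 := by field_simp
      simp only [h1, hφ1, Finset.sum_const, smul_zero, mul_zero]
      exact hδ0
  -- membership implies value ≤ fRisk δ₁ when in QSet δ₁
  have hbdd : ∀ δ, BddAbove ((fun q : Fin T → ℝ => ∑ t, q t * l t) '' (QSet T φ δ)) := by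
    intro δ
    refine ⟨∑ t, l t, ?_⟩
    rintro x ⟨q, ⟨hq0, hq1, _⟩, rfl⟩
    refine Finset.sum_le_sum fun t _ => ?_
    have hqle : q t ≤ 1 := by
      have := Finset.single_le_sum (f := q) (fun i _ => hq0 i) (Finset.mem_univ t)
      linarith [hq1 ▸ this]
    nlinarith [hl t, hq0 t]
  have hfR1 : 0 ≤ fRisk T φ δ₁ l := by
    have hmem : (∑ t, (1/(T:ℝ)) * l t) ∈
        (fun q : Fin T → ℝ => ∑ t, q t * l t) '' (QSet T φ δ₁) :=
      ⟨_, hunif δ₁ hδ₁.le, rfl⟩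
    have h0 : 0 ≤ ∑ t, (1/(T:ℝ)) * l t :=
      Finset.sum_nonneg fun t _ => mul_nonneg (by positivity) (hl t)
    exact le_trans h0 (le_csSup (hbdd δ₁) hmem)
  -- main bound per element
  apply Real.sSup_le _ (by positivity)
  rintro x ⟨q, ⟨hq0, hq1, hqd⟩, rfl⟩
  -- perturbed vector
  set q' : Fin T → ℝ := fun t => lam * q t + (1 - lam) * (1 / (T:ℝ)) with hq'
  have hq'mem : q' ∈ QSet T φ δ₁ := by
    refine ⟨fun t => add_nonneg (mul_nonneg hlam0.le (hq0 t))
      (mul_nonneg (by linarith) (by positivity)), ?_, ?_⟩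
    · simp only [hq', Finset.sum_add_distrib, ← Finset.mul_sum, hq1,
        Finset.sum_const, Finset.card_univ, Fintype.card_fin, nsmul_eq_mul]
      field_simp
      ring
    · have key : ∀ t : Fin T, φ ((T:ℝ) * q' t) ≤ lam * φ ((T:ℝ) * q t) := by
        intro t
        have hTinv : (T:ℝ) * (1 / (T:ℝ)) = 1 := by field_simp
        have harg : (T:ℝ) * q' t = lam * ((T:ℝ) * q t) + (1 - lam) * 1 := by
          simp only [hq']; linear_combination (1 - lam) * hTinv
        have ha : (0:ℝ) ≤ lam := hlam0.le
        have hb : (0:ℝ) ≤ 1 - lam := by linarith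
        have hab : lam + (1 - lam) = 1 := by ring
        have hconv := hφconv.2 (x := (T:ℝ) * q t) (y := 1)
          (Set.mem_Ici.mpr (by have := hq0 t; positivity))
          (Set.mem_Ici.mpr zero_le_one) ha hb hab
        rw [harg]
        simp only [smul_eq_mul, hφ1, mul_zero, add_zero] at hconv
        exact hconv
      have hsum : ∑ t, φ ((T:ℝ) * q' t) ≤ lam * ∑ t, φ ((T:ℝ) * q t) := by
        rw [Finset.mul_sum]
        exact Finset.sum_le_sum fun t _ => key t
      have h1 : (1/(T:ℝ)) * ∑ t, φ ((T:ℝ) * q' t) ≤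
          lam * ((1/(T:ℝ)) * ∑ t, φ ((T:ℝ) * q t)) := by
        have := mul_le_mul_of_nonneg_left hsum (le_of_lt (by positivity : (0:ℝ) < 1/(T:ℝ)))
        linarith [this]
      have h2 : lam * ((1/(T:ℝ)) * ∑ t, φ ((T:ℝ) * q t)) ≤ lam * δ₂ :=
        mul_le_mul_of_nonneg_left hqd hlam0.le
      have h3 : lam * δ₂ = δ₁ := div_mul_cancel₀ δ₁ hδ₂.ne'
      linarith
  have hval : lam * ∑ t, q t * l t ≤ ∑ t, q' t * l t := by
    rw [Finset.mul_sum]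
    refine Finset.sum_le_sum fun t _ => ?_
    simp only [hq']
    have h0 : 0 ≤ (1 - lam) * (1 / (T:ℝ)) * l t :=
      mul_nonneg (mul_nonneg (by linarith) (by positivity)) (hl t)
    nlinarith [hl t]
  have hle : ∑ t, q' t * l t ≤ fRisk T φ δ₁ l :=
    le_csSup (hbdd δ₁) ⟨q', hq'mem, rfl⟩
  have : lam * ∑ t, q t * l t ≤ fRisk T φ δ₁ l := le_trans hval hle
  rw [div_mul_eq_mul_div, le_div_iff₀ hδ₁]
  calc (∑ t, q t * l t) * δ₁ = (lam * ∑ t, q t * l t) * δ₂ := by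
        rw [hlam]; field_simp
    _ ≤ δ₂ * fRisk T φ δ₁ l := by nlinarith [hδ₂]
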